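/- arXiv:1711.10983 — 4 statements merged into one kernel-verified Lean document; each statement's English description precedes it below -/
import Mathlib

section
/- Let f be a discrete Morse-Bott function on a finite abstract simplicial complex K, let C be a collection for f and σ ∈ C. Then the two numbers U(σ) = #{τ ∉ C : σ < τ and f(τ) < f(σ)} and D(σ) = #{ν ∉ C : ν < σ and f(ν) > f(σ)} are not both equal to 1. -/
open Finset

noncomputable section
open scoped Classical

/-- `σ` is a facet of `τ`: `σ ⊆ τ` and `dim σ = dim τ − 1`. -/
def Facet (σ τ : Finset ℕ) : Prop := σ ⊆ τ ∧ σ.card + 1 = τ.card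

/-- A finite abstract simplicial complex: a finite family of nonempty finite sets
closed under taking nonempty subsets. -/
def IsComplex (K : Finset (Finset ℕ)) : Prop :=
  (∀ σ ∈ K, σ.Nonempty) ∧ ∀ σ ∈ K, ∀ ν, ν ⊆ σ → ν.Nonempty → ν ∈ K

/-- The closure of a set of cells: all nonempty subsets of its cells. -/
def closureOf (S : Finset (Finset ℕ)) : Finset (Finset ℕ) :=
  S.biUnion fun σ => σ.powerset.filter fun ν => ν ≠ ∅

/-- The graph on `C` joining two cells whenever their closures intersect is connected. -/
def ConnectedOn (C : Finset (Finset ℕ)) : Prop :=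
  ∀ a ∈ C, ∀ b ∈ C,
    Relation.ReflTransGen
      (fun x y => x ∈ C ∧ y ∈ C ∧ (closureOf {x} ∩ closureOf {y}).Nonempty) a b

/-- A nonempty set of cells of `K`, all with the same `f`-value, whose
closure-intersection graph is connected. -/
def IsPreCollection (K : Finset (Finset ℕ)) (f : Finset ℕ → ℝ) (C : Finset (Finset ℕ)) :
    Prop :=
  C ⊆ K ∧ C.Nonempty ∧ (∀ σ ∈ C, ∀ τ ∈ C, f σ = f τ) ∧ ConnectedOn C

/-- A collection for `f`: a maximal constant-value connected set of cells. -/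
def IsCollection (K : Finset (Finset ℕ)) (f : Finset ℕ → ℝ) (C : Finset (Finset ℕ)) :
    Prop :=
  IsPreCollection K f C ∧ ∀ C', IsPreCollection K f C' → C ⊆ C' → C' = C

/-- `#{τ ∉ C : σ < τ, f(τ) < f(σ)}`. -/
def UpCount (K : Finset (Finset ℕ)) (f : Finset ℕ → ℝ) (C : Finset (Finset ℕ))
    (σ : Finset ℕ) : ℕ :=
  (K.filter fun τ => τ ∉ C ∧ Facet σ τ ∧ f τ < f σ).card

/-- `#{ν ∉ C : ν < σ, f(ν) > f(σ)}`. -/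
def DownCount (K : Finset (Finset ℕ)) (f : Finset ℕ → ℝ) (C : Finset (Finset ℕ))
    (σ : Finset ℕ) : ℕ :=
  (K.filter fun ν => ν ∉ C ∧ Facet ν σ ∧ f σ < f ν).card

/-- A discrete Morse-Bott function on `K`. -/
def IsMorseBott (K : Finset (Finset ℕ)) (f : Finset ℕ → ℝ) : Prop :=
  ∀ C, IsCollection K f C → ∀ σ ∈ C, UpCount K f C σ ≤ 1 ∧ DownCount K f C σ ≤ 1

/-- `σ` is upward noncritical w.r.t. `C`. -/
def UpNoncrit (K : Finset (Finset ℕ)) (f : Finset ℕ → ℝ) (C : Finset (Finset ℕ))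
    (σ : Finset ℕ) : Prop :=
  ∃ w ∈ K, w ∉ C ∧ Facet σ w ∧ f w < f σ

/-- `σ` is downward noncritical w.r.t. `C`. -/
def DownNoncrit (K : Finset (Finset ℕ)) (f : Finset ℕ → ℝ) (C : Finset (Finset ℕ))
    (σ : Finset ℕ) : Prop :=
  ∃ w ∈ K, w ∉ C ∧ Facet w σ ∧ f σ < f w

/-- The reduced collection `C^red`: the cells of `C` that are neither upward nor
downward noncritical w.r.t. `C`. -/
def reducedOf (K : Finset (Finset ℕ)) (f : Finset ℕ → ℝ) (C : Finset (Finset ℕ)) :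
    Finset (Finset ℕ) :=
  C.filter fun σ => ¬ UpNoncrit K f C σ ∧ ¬ DownNoncrit K f C σ

/-- A noncritical pair: a two-element set `{σ, τ}` with `σ < τ` and `f σ ≥ f τ`. -/
def IsNoncritPair (f : Finset ℕ → ℝ) (S : Finset (Finset ℕ)) : Prop :=
  ∃ σ τ, Facet σ τ ∧ f τ ≤ f σ ∧ S = {σ, τ}

/-- A discrete Morse function in Forman's sense. -/
def IsDiscreteMorse (K : Finset (Finset ℕ)) (g : Finset ℕ → ℝ) : Prop :=
  ∀ σ ∈ K, (K.filter fun τ => Facet σ τ ∧ g τ ≤ g σ).card ≤ 1 ∧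
    (K.filter fun ν => Facet ν σ ∧ g σ ≤ g ν).card ≤ 1

/-- A critical cell of `g`. -/
def IsCritical (K : Finset (Finset ℕ)) (g : Finset ℕ → ℝ) (σ : Finset ℕ) : Prop :=
  σ ∈ K ∧ (K.filter fun τ => Facet σ τ ∧ g τ ≤ g σ).card = 0 ∧
    (K.filter fun ν => Facet ν σ ∧ g σ ≤ g ν).card = 0

/-- Every cell of `K` lies in some collection. -/
lemma exists_collection_mem (K : Finset (Finset ℕ)) (f : Finset ℕ → ℝ)
    (τ : Finset ℕ) (hτ : τ ∈ K) : ∃ C, IsCollection K f C ∧ τ ∈ C := by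
  classical
  set S : Finset (Finset (Finset ℕ)) :=
    K.powerset.filter (fun C => IsPreCollection K f C ∧ τ ∈ C) with hS
  have hne : ({τ} : Finset (Finset ℕ)) ∈ S := by
    simp only [hS, mem_filter, mem_powerset]
    refine ⟨by simpa using hτ, ⟨by simpa using hτ, ⟨τ, by simp⟩, ?_, ?_⟩, by simp⟩
    · intro a ha b hb
      simp only [mem_singleton] at ha hb
      subst ha; subst hb; simp
    · intro a ha b hb
      simp only [mem_singleton] at ha hb
      subst ha; subst hb; exact Relation.ReflTransGen.refl
  obtain ⟨C, hCS, hmax⟩ := S.exists_max_image (fun C => C.card) ⟨_, hne⟩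
  simp only [hS, mem_filter, mem_powerset] at hCS
  refine ⟨C, ⟨hCS.2.1, ?_⟩, hCS.2.2⟩
  intro C' hC' hsub
  have hC'S : C' ∈ S := by
    simp only [hS, mem_filter, mem_powerset]
    exact ⟨hC'.1, hC', hsub hCS.2.2⟩
  exact (Finset.eq_of_subset_of_card_le hsub (hmax _ hC'S)).symm

lemma same_value_of_mem_collection (K : Finset (Finset ℕ)) (f : Finset ℕ → ℝ)
    (C : Finset (Finset ℕ)) (hC : IsCollection K f C) {a b : Finset ℕ}
    (ha : a ∈ C) (hb : b ∈ C) : f a = f b :=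
  hC.1.2.2.1 a ha b hb

/-- For a discrete Morse-Bott function `f`, a collection `C` and `σ ∈ C`,
the counts `U(σ)` and `D(σ)` are not both equal to `1`. -/
theorem statement0 (K : Finset (Finset ℕ)) (hK : IsComplex K) (f : Finset ℕ → ℝ)
    (hf : IsMorseBott K f) (C : Finset (Finset ℕ)) (hC : IsCollection K f C)
    (σ : Finset ℕ) (hσ : σ ∈ C) :
    ¬ (UpCount K f C σ = 1 ∧ DownCount K f C σ = 1) := by
  classical
  rintro ⟨hU, hD⟩
  -- extract τ and ν
  have hσK : σ ∈ K := hC.1.1 hσ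
  obtain ⟨τ, hτmem⟩ : ∃ τ, τ ∈ K.filter fun τ => τ ∉ C ∧ Facet σ τ ∧ f τ < f σ := by
    have hU' : (K.filter fun τ => τ ∉ C ∧ Facet σ τ ∧ f τ < f σ).card = 1 := hU
    exact Finset.card_pos.mp (by omega)
  obtain ⟨ν, hνmem⟩ : ∃ ν, ν ∈ K.filter fun ν => ν ∉ C ∧ Facet ν σ ∧ f σ < f ν := by
    have hD' : (K.filter fun ν => ν ∉ C ∧ Facet ν σ ∧ f σ < f ν).card = 1 := hD
    exact Finset.card_pos.mp (by omega)
  simp only [mem_filter] at hτmem hνmem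
  obtain ⟨hτK, hτC, hστ, hfτ⟩ := hτmem
  obtain ⟨hνK, hνC, hνσ, hfν⟩ := hνmem
  -- the other cell σ' between ν and τ
  have hστsub : σ ⊆ τ := hστ.1
  have hνσsub : ν ⊆ σ := hνσ.1
  have hcard1 : (τ \ σ).card = 1 := by
    rw [Finset.card_sdiff_of_subset hστsub, ← hστ.2]; omega
  obtain ⟨a, ha⟩ := Finset.card_eq_one.mp hcard1
  have haτ : a ∈ τ := (Finset.mem_sdiff.mp (ha ▸ Finset.mem_singleton_self a)).1
  have haσ : a ∉ σ := (Finset.mem_sdiff.mp (ha ▸ Finset.mem_singleton_self a)).2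
  have haν : a ∉ ν := fun h => haσ (hνσsub h)
  set σ' : Finset ℕ := insert a ν with hσ'
  have hσ'card : σ'.card = ν.card + 1 := Finset.card_insert_of_notMem haν
  have hνσ' : Facet ν σ' := ⟨Finset.subset_insert _ _, hσ'card.symm⟩
  have hσ'τsub : σ' ⊆ τ := by
    intro x hx
    rcases Finset.mem_insert.mp hx with h | h
    · exact h ▸ haτ
    · exact hστsub (hνσsub h)
  have hσ'τ : Facet σ' τ := ⟨hσ'τsub, by have h1 := hνσ.2; have h2 := hστ.2; rw [hσ'card]; omega⟩
  have hσ'ne : σ' ≠ σ := fun h => haσ (h ▸ Finset.mem_insert_self a ν)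
  have hσ'K : σ' ∈ K := hK.2 τ hτK σ' hσ'τsub ⟨a, Finset.mem_insert_self a ν⟩
  -- collection containing τ
  obtain ⟨Cτ, hCτ, hτCτ⟩ := exists_collection_mem K f τ hτK
  have hDτ := (hf Cτ hCτ τ hτCτ).2
  have hσCτ : σ ∉ Cτ := fun h =>
    absurd (same_value_of_mem_collection K f Cτ hCτ h hτCτ) (by linarith)
  have hσin : σ ∈ K.filter fun x => x ∉ Cτ ∧ Facet x τ ∧ f τ < f x :=
    Finset.mem_filter.mpr ⟨hσK, hσCτ, hστ, hfτ⟩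
  have hfσ'le : f σ' ≤ f τ := by
    by_contra h
    push_neg at h
    have hσ'Cτ : σ' ∉ Cτ := fun hm =>
      absurd (same_value_of_mem_collection K f Cτ hCτ hm hτCτ) (by linarith)
    have hσ'in : σ' ∈ K.filter fun x => x ∉ Cτ ∧ Facet x τ ∧ f τ < f x :=
      Finset.mem_filter.mpr ⟨hσ'K, hσ'Cτ, hσ'τ, h⟩
    have : ({σ, σ'} : Finset (Finset ℕ)) ⊆
        K.filter fun x => x ∉ Cτ ∧ Facet x τ ∧ f τ < f x := by
      intro x hx
      rcases Finset.mem_insert.mp hx with h' | h'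
      · exact h' ▸ hσin
      · exact (Finset.mem_singleton.mp h') ▸ hσ'in
    have h2 : 2 ≤ DownCount K f Cτ τ := by
      have := Finset.card_le_card this
      rwa [Finset.card_pair (Ne.symm hσ'ne)] at this
    omega
  -- collection containing ν
  obtain ⟨Cν, hCν, hνCν⟩ := exists_collection_mem K f ν hνK
  have hUν := (hf Cν hCν ν hνCν).1
  have hσCν : σ ∉ Cν := fun h =>
    absurd (same_value_of_mem_collection K f Cν hCν h hνCν) (by linarith)
  have hσin' : σ ∈ K.filter fun x => x ∉ Cν ∧ Facet ν x ∧ f x < f ν :=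
    Finset.mem_filter.mpr ⟨hσK, hσCν, hνσ, hfν⟩
  have hfσ'ge : f ν ≤ f σ' := by
    by_contra h
    push_neg at h
    have hσ'Cν : σ' ∉ Cν := fun hm =>
      absurd (same_value_of_mem_collection K f Cν hCν hm hνCν) (by linarith)
    have hσ'in : σ' ∈ K.filter fun x => x ∉ Cν ∧ Facet ν x ∧ f x < f ν :=
      Finset.mem_filter.mpr ⟨hσ'K, hσ'Cν, hνσ', h⟩
    have : ({σ, σ'} : Finset (Finset ℕ)) ⊆
        K.filter fun x => x ∉ Cν ∧ Facet ν x ∧ f x < f ν := by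
      intro x hx
      rcases Finset.mem_insert.mp hx with h' | h'
      · exact h' ▸ hσin'
      · exact (Finset.mem_singleton.mp h') ▸ hσ'in
    have h2 : 2 ≤ UpCount K f Cν ν := by
      have := Finset.card_le_card this
      rwa [Finset.card_pair (Ne.symm hσ'ne)] at this
    omega
  linarith
end
end

section
/- Let f be a discrete Morse-Bott function on a finite abstract simplicial complex K and let C be a collection for f. Then no cell σ ∈ C is simultaneously upward noncritical and downward noncritical with respect to C. -/
open Finset

noncomputable section
open scoped Classical

lemma exists_collection (K : Finset (Finset ℕ)) (f : Finset ℕ → ℝ)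
    (x : Finset ℕ) (hx : x ∈ K) : ∃ C, IsCollection K f C ∧ x ∈ C := by
  classical
  set S : Finset (Finset (Finset ℕ)) :=
    K.powerset.filter (fun C => IsPreCollection K f C ∧ x ∈ C) with hSdef
  have hxS : ({x} : Finset (Finset ℕ)) ∈ S := by
    simp only [hSdef, Finset.mem_filter, Finset.mem_powerset]
    refine ⟨by simpa using hx, ⟨by simpa using hx, ⟨x, Finset.mem_singleton_self x⟩, ?_, ?_⟩,
      Finset.mem_singleton_self x⟩
    · intro a ha b hb
      rw [Finset.mem_singleton] at ha hb
      rw [ha, hb]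
    · intro a ha b hb
      rw [Finset.mem_singleton] at ha hb
      rw [ha, hb]
  obtain ⟨C, hCS, hCmax⟩ := S.exists_max_image Finset.card ⟨_, hxS⟩
  simp only [hSdef, Finset.mem_filter, Finset.mem_powerset] at hCS
  refine ⟨C, ⟨hCS.2.1, ?_⟩, hCS.2.2⟩
  intro C' hC' hsub
  have hC'S : C' ∈ S := by
    simp only [hSdef, Finset.mem_filter, Finset.mem_powerset]
    exact ⟨hC'.1, hC', hsub hCS.2.2⟩
  exact (Finset.eq_of_subset_of_card_le hsub (hCmax C' hC'S)).symm

/-- No cell of a collection `C` is simultaneously upward and downward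
noncritical with respect to `C`. -/
theorem statement1 (K : Finset (Finset ℕ)) (hK : IsComplex K) (f : Finset ℕ → ℝ)
    (hf : IsMorseBott K f) (C : Finset (Finset ℕ)) (hC : IsCollection K f C)
    (σ : Finset ℕ) (hσ : σ ∈ C) :
    ¬ (UpNoncrit K f C σ ∧ DownNoncrit K f C σ) := by
  rintro ⟨⟨w, hwK, hwC, ⟨hσw, hcardw⟩, hfw⟩, ⟨v, hvK, hvC, ⟨hvσ, hcardv⟩, hfv⟩⟩
  have hσK : σ ∈ K := hC.1.1 hσ
  have hbne : (w \ σ).Nonempty := by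
    rw [← Finset.card_pos, Finset.card_sdiff_of_subset hσw]; omega
  obtain ⟨b, hbmem⟩ := hbne
  have hbw : b ∈ w := (Finset.mem_sdiff.mp hbmem).1
  have hbσ : b ∉ σ := (Finset.mem_sdiff.mp hbmem).2
  set σ' := insert b v with hσ'def
  have hbv : b ∉ v := fun h => hbσ (hvσ h)
  have hcard' : σ'.card = v.card + 1 := Finset.card_insert_of_notMem hbv
  have hσ'w : σ' ⊆ w := by
    intro t ht
    rcases Finset.mem_insert.mp ht with h | h
    · exact h ▸ hbw
    · exact hσw (hvσ h)
  have hσ'K : σ' ∈ K := hK.2 w hwK σ' hσ'w ⟨b, Finset.mem_insert_self _ _⟩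
  have hne : σ' ≠ σ := fun h => hbσ (h ▸ Finset.mem_insert_self b v)
  have hfacet1 : Facet σ' w := ⟨hσ'w, by omega⟩
  have hfacet2 : Facet v σ' := ⟨Finset.subset_insert _ _, by omega⟩
  by_cases hcase : f σ' < f v
  · -- contradiction with UpCount at the collection of v
    obtain ⟨Cv, hCv, hvCv⟩ := exists_collection K f v hvK
    have hconst : ∀ y ∈ Cv, f y = f v := fun y hy => hCv.1.2.2.1 y hy v hvCv
    have h1 : σ ∈ K.filter fun τ => τ ∉ Cv ∧ Facet v τ ∧ f τ < f v := by
      refine Finset.mem_filter.mpr ⟨hσK, fun h => ?_, ⟨hvσ, hcardv⟩, hfv⟩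
      exact absurd (hconst σ h) (ne_of_lt hfv)
    have h2 : σ' ∈ K.filter fun τ => τ ∉ Cv ∧ Facet v τ ∧ f τ < f v := by
      refine Finset.mem_filter.mpr ⟨hσ'K, fun h => ?_, hfacet2, hcase⟩
      exact absurd (hconst σ' h) (ne_of_lt hcase)
    have h2' : 1 < UpCount K f Cv v :=
      Finset.one_lt_card.mpr ⟨σ, h1, σ', h2, hne.symm⟩
    have := (hf Cv hCv v hvCv).1
    omega
  · -- contradiction with DownCount at the collection of w
    push_neg at hcase
    obtain ⟨Cw, hCw, hwCw⟩ := exists_collection K f w hwK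
    have hconst : ∀ y ∈ Cw, f y = f w := fun y hy => hCw.1.2.2.1 y hy w hwCw
    have hfσ'w : f w < f σ' := lt_of_lt_of_le (lt_trans hfw hfv) hcase
    have h1 : σ ∈ K.filter fun ν => ν ∉ Cw ∧ Facet ν w ∧ f w < f ν := by
      refine Finset.mem_filter.mpr ⟨hσK, fun h => ?_, ⟨hσw, hcardw⟩, hfw⟩
      exact absurd (hconst σ h) (ne_of_gt hfw)
    have h2 : σ' ∈ K.filter fun ν => ν ∉ Cw ∧ Facet ν w ∧ f w < f ν := by
      refine Finset.mem_filter.mpr ⟨hσ'K, fun h => ?_, hfacet1, hfσ'w⟩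
      exact absurd (hconst σ' h) (ne_of_gt hfσ'w)
    have h2' : 1 < DownCount K f Cw w :=
      Finset.one_lt_card.mpr ⟨σ, h1, σ', h2, hne.symm⟩
    have := (hf Cw hCw w hwCw).2
    omega
end
end

section
/- Let f be a discrete Morse-Bott function on a finite abstract simplicial complex K and let C^{1,red}, …, C^{l,red} be the reduced collections of f that are nonempty and not noncritical pairs. Then Σ_{i=1}^{l} Σ_{σ ∈ C^{i,red}} (−1)^{dim σ} = Σ_{σ ∈ K} (−1)^{dim σ}, i.e., the sum of the Euler characteristics of these reduced collections equals the Euler characteristic of K. -/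
open Finset

noncomputable section
open scoped Classical

lemma exists_coll (K : Finset (Finset ℕ)) (f : Finset ℕ → ℝ) (σ : Finset ℕ)
    (hσ : σ ∈ K) : ∃ C, IsCollection K f C ∧ σ ∈ C := by
  have hsing : IsPreCollection K f {σ} ∧ σ ∈ ({σ} : Finset (Finset ℕ)) := by
    refine ⟨⟨?_, ⟨σ, mem_singleton_self σ⟩, ?_, ?_⟩, mem_singleton_self σ⟩
    · intro x hx; rw [mem_singleton] at hx; subst hx; exact hσ
    · intro x hx y hy; rw [mem_singleton] at hx hy; subst hx; subst hy; rfl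
    · intro a ha b hb; rw [mem_singleton] at ha hb; subst ha; subst hb
      exact Relation.ReflTransGen.refl
  set P := K.powerset.filter (fun C => IsPreCollection K f C ∧ σ ∈ C) with hP
  have hne : P.Nonempty := ⟨{σ}, by
    rw [hP, mem_filter, mem_powerset]
    exact ⟨hsing.1.1, hsing⟩⟩
  obtain ⟨C, hC, hmax⟩ := P.exists_max_image Finset.card hne
  rw [hP, mem_filter, mem_powerset] at hC
  refine ⟨C, ⟨hC.2.1, ?_⟩, hC.2.2⟩
  intro C' hC' hsub
  have hC'P : C' ∈ P := by
    rw [hP, mem_filter, mem_powerset]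
    exact ⟨hC'.1, hC', hsub hC.2.2⟩
  exact (Finset.eq_of_subset_of_card_le hsub (hmax C' hC'P)).symm

lemma coll_unique {K : Finset (Finset ℕ)} {f : Finset ℕ → ℝ} {C C' : Finset (Finset ℕ)}
    {σ : Finset ℕ} (hC : IsCollection K f C) (hC' : IsCollection K f C')
    (h1 : σ ∈ C) (h2 : σ ∈ C') : C = C' := by
  have hpre : IsPreCollection K f (C ∪ C') := by
    refine ⟨union_subset hC.1.1 hC'.1.1, ⟨σ, mem_union_left _ h1⟩, ?_, ?_⟩
    · intro x hx y hy
      have hx' : f x = f σ := by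
        rcases mem_union.mp hx with h | h
        · exact hC.1.2.2.1 x h σ h1
        · exact hC'.1.2.2.1 x h σ h2
      have hy' : f y = f σ := by
        rcases mem_union.mp hy with h | h
        · exact hC.1.2.2.1 y h σ h1
        · exact hC'.1.2.2.1 y h σ h2
      rw [hx', hy']
    · intro a ha b hb
      have mono : ∀ (D : Finset (Finset ℕ)), D ⊆ C ∪ C' → ∀ x y,
          Relation.ReflTransGen
            (fun x y => x ∈ D ∧ y ∈ D ∧ (closureOf {x} ∩ closureOf {y}).Nonempty) x y →
          Relation.ReflTransGen
            (fun x y => x ∈ C ∪ C' ∧ y ∈ C ∪ C' ∧ (closureOf {x} ∩ closureOf {y}).Nonempty) x y := by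
        intro D hD x y h
        exact Relation.ReflTransGen.mono (fun x y (hxy : x ∈ D ∧ y ∈ D ∧ (closureOf {x} ∩ closureOf {y}).Nonempty) =>
            (⟨hD hxy.1, hD hxy.2.1, hxy.2.2⟩ : x ∈ C ∪ C' ∧ y ∈ C ∪ C' ∧ (closureOf {x} ∩ closureOf {y}).Nonempty)) x y h
      have hstep : ∀ x ∈ C ∪ C', Relation.ReflTransGen
          (fun x y => x ∈ C ∪ C' ∧ y ∈ C ∪ C' ∧ (closureOf {x} ∩ closureOf {y}).Nonempty) x σ := by
        intro x hx
        rcases mem_union.mp hx with h | h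
        · exact mono C subset_union_left x σ (hC.1.2.2.2 x h σ h1)
        · exact mono C' subset_union_right x σ (hC'.1.2.2.2 x h σ h2)
      have h1' : Relation.ReflTransGen _ a σ := hstep a ha
      have h2' : Relation.ReflTransGen
          (fun x y => x ∈ C ∪ C' ∧ y ∈ C ∪ C' ∧ (closureOf {x} ∩ closureOf {y}).Nonempty) σ b := by
        rcases mem_union.mp hb with h | h
        · exact mono C subset_union_left σ b (hC.1.2.2.2 σ h1 b h)
        · exact mono C' subset_union_right σ b (hC'.1.2.2.2 σ h2 b h)
      exact h1'.trans h2'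
  have e1 := hC.2 (C ∪ C') hpre subset_union_left
  have e2 := hC'.2 (C ∪ C') hpre subset_union_right
  exact e1.symm.trans e2

lemma not_mem_coll {K : Finset (Finset ℕ)} {f : Finset ℕ → ℝ} {C : Finset (Finset ℕ)}
    {σ τ : Finset ℕ} (hC : IsCollection K f C) (hτ : τ ∈ C) (hne : f σ ≠ f τ) : σ ∉ C :=
  fun h => hne (hC.1.2.2.1 σ h τ hτ)

lemma up_unique {K : Finset (Finset ℕ)} {f : Finset ℕ → ℝ} {C : Finset (Finset ℕ)}
    {σ w w' : Finset ℕ} (hf : IsMorseBott K f) (hC : IsCollection K f C) (hσ : σ ∈ C)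
    (hw : w ∈ K ∧ w ∉ C ∧ Facet σ w ∧ f w < f σ)
    (hw' : w' ∈ K ∧ w' ∉ C ∧ Facet σ w' ∧ f w' < f σ) : w = w' := by
  have h := (hf C hC σ hσ).1
  rw [UpCount, Finset.card_le_one] at h
  exact h w (mem_filter.mpr ⟨hw.1, hw.2⟩) w' (mem_filter.mpr ⟨hw'.1, hw'.2⟩)

lemma down_unique {K : Finset (Finset ℕ)} {f : Finset ℕ → ℝ} {C : Finset (Finset ℕ)}
    {σ w w' : Finset ℕ} (hf : IsMorseBott K f) (hC : IsCollection K f C) (hσ : σ ∈ C)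
    (hw : w ∈ K ∧ w ∉ C ∧ Facet w σ ∧ f σ < f w)
    (hw' : w' ∈ K ∧ w' ∉ C ∧ Facet w' σ ∧ f σ < f w') : w = w' := by
  have h := (hf C hC σ hσ).2
  rw [DownCount, Finset.card_le_one] at h
  exact h w (mem_filter.mpr ⟨hw.1, hw.2⟩) w' (mem_filter.mpr ⟨hw'.1, hw'.2⟩)

lemma no_both {K : Finset (Finset ℕ)} {f : Finset ℕ → ℝ} {C : Finset (Finset ℕ)}
    {σ : Finset ℕ} (hK : IsComplex K) (hf : IsMorseBott K f) (hC : IsCollection K f C)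
    (hσ : σ ∈ C) (hup : UpNoncrit K f C σ) (hdn : DownNoncrit K f C σ) : False := by
  obtain ⟨w, hwK, hwC, ⟨hsw, hcw⟩, hfw⟩ := hup
  obtain ⟨v, hvK, hvC, ⟨hvs, hcv⟩, hfv⟩ := hdn
  -- the other cell between v and w
  set σ' := v ∪ (w \ σ) with hσ'def
  have hvw : v ⊆ w := hvs.trans hsw
  have hwσcard : (w \ σ).card = 1 := by
    rw [card_sdiff_of_subset hsw]; omega
  obtain ⟨a, ha⟩ := Finset.card_eq_one.mp hwσcard
  have haw : a ∈ w := by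
    have : a ∈ w \ σ := ha ▸ mem_singleton_self a
    exact (mem_sdiff.mp this).1
  have haσ : a ∉ σ := by
    have : a ∈ w \ σ := ha ▸ mem_singleton_self a
    exact (mem_sdiff.mp this).2
  have hav : a ∉ v := fun h => haσ (hvs h)
  have hσ'w : σ' ⊆ w := union_subset hvw (sdiff_subset)
  have hσ'card : σ'.card = v.card + 1 := by
    rw [hσ'def, ha]
    rw [Finset.card_union_of_disjoint (by simp [hav])]
    simp
  have hσ'ne : σ'.Nonempty := ⟨a, by rw [hσ'def, ha]; simp⟩
  have hσ'K : σ' ∈ K := hK.2 w hwK σ' hσ'w hσ'ne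
  have hσ'σ : σ' ≠ σ := by
    intro h
    have : a ∈ σ' := by rw [hσ'def, ha]; simp
    rw [h] at this; exact haσ this
  have hfacet1 : Facet σ' w := ⟨hσ'w, by omega⟩
  have hfacet2 : Facet v σ' := ⟨subset_union_left, by omega⟩
  -- collection of w
  obtain ⟨Cw, hCw, hwCw⟩ := exists_coll K f w hwK
  have hσCw : σ ∉ Cw := not_mem_coll hCw hwCw (by linarith)
  have hσK : σ ∈ K := hC.1.1 hσ
  -- bound on f σ' from below count of w
  have hle : f σ' ≤ f w := by
    by_contra hlt
    push_neg at hlt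
    have hσ'Cw : σ' ∉ Cw := not_mem_coll hCw hwCw (by linarith)
    exact hσ'σ (down_unique hf hCw hwCw ⟨hσ'K, hσ'Cw, hfacet1, hlt⟩
      ⟨hσK, hσCw, ⟨hsw, hcw⟩, hfw⟩)
  -- collection of v
  obtain ⟨Cv, hCv, hvCv⟩ := exists_coll K f v hvK
  have hσCv : σ ∉ Cv := not_mem_coll hCv hvCv (by linarith)
  have hge : f v ≤ f σ' := by
    by_contra hlt
    push_neg at hlt
    have hσ'Cv : σ' ∉ Cv := not_mem_coll hCv hvCv (by linarith)
    exact hσ'σ (up_unique hf hCv hvCv ⟨hσ'K, hσ'Cv, hfacet2, hlt⟩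
      ⟨hσK, hσCv, ⟨hvs, hcv⟩, hfv⟩)
  linarith

def collOf (K : Finset (Finset ℕ)) (f : Finset ℕ → ℝ) (σ : Finset ℕ) :
    Finset (Finset ℕ) :=
  if h : ∃ C, IsCollection K f C ∧ σ ∈ C then h.choose else ∅

lemma collOf_spec {K : Finset (Finset ℕ)} {f : Finset ℕ → ℝ} {σ : Finset ℕ}
    (hσ : σ ∈ K) : IsCollection K f (collOf K f σ) ∧ σ ∈ collOf K f σ := by
  rw [collOf, dif_pos (exists_coll K f σ hσ)]
  exact (exists_coll K f σ hσ).choose_spec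

lemma collOf_eq {K : Finset (Finset ℕ)} {f : Finset ℕ → ℝ} {C : Finset (Finset ℕ)}
    {σ : Finset ℕ} (hC : IsCollection K f C) (hσ : σ ∈ C) : collOf K f σ = C := by
  have hσK : σ ∈ K := hC.1.1 hσ
  exact coll_unique (collOf_spec hσK).1 hC (collOf_spec hσK).2 hσ

def partner (K : Finset (Finset ℕ)) (f : Finset ℕ → ℝ) (σ : Finset ℕ) : Finset ℕ :=
  if h : UpNoncrit K f (collOf K f σ) σ then h.choose
  else if h' : DownNoncrit K f (collOf K f σ) σ then h'.choose
  else if h'' : IsNoncritPair f (reducedOf K f (collOf K f σ)) then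
    symmDiff (symmDiff h''.choose h''.choose_spec.choose) σ
  else ∅

lemma partner_up_spec {K : Finset (Finset ℕ)} {f : Finset ℕ → ℝ} {σ : Finset ℕ}
    (hup : UpNoncrit K f (collOf K f σ) σ) :
    partner K f σ ∈ K ∧ partner K f σ ∉ collOf K f σ ∧ Facet σ (partner K f σ) ∧
      f (partner K f σ) < f σ := by
  rw [partner, dif_pos hup]
  exact hup.choose_spec

lemma partner_down_spec {K : Finset (Finset ℕ)} {f : Finset ℕ → ℝ} {σ : Finset ℕ}
    (hnup : ¬ UpNoncrit K f (collOf K f σ) σ) (hdn : DownNoncrit K f (collOf K f σ) σ) :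
    partner K f σ ∈ K ∧ partner K f σ ∉ collOf K f σ ∧ Facet (partner K f σ) σ ∧
      f σ < f (partner K f σ) := by
  rw [partner, dif_neg hnup, dif_pos hdn]
  exact hdn.choose_spec

lemma partner_up_inv {K : Finset (Finset ℕ)} {f : Finset ℕ → ℝ} {σ : Finset ℕ}
    (hK : IsComplex K) (hf : IsMorseBott K f) (hσ : σ ∈ K)
    (hup : UpNoncrit K f (collOf K f σ) σ) :
    DownNoncrit K f (collOf K f (partner K f σ)) (partner K f σ) ∧
      ¬ UpNoncrit K f (collOf K f (partner K f σ)) (partner K f σ) ∧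
      partner K f (partner K f σ) = σ := by
  obtain ⟨hwK, hwC, hfac, hfw⟩ := partner_up_spec hup
  set w := partner K f σ with hw
  have hCw := (collOf_spec (f := f) hwK).1
  have hwCw := (collOf_spec (f := f) hwK).2
  have hσCw : σ ∉ collOf K f w := not_mem_coll hCw hwCw (by linarith)
  have hdnw : DownNoncrit K f (collOf K f w) w := ⟨σ, hσ, hσCw, hfac, hfw⟩
  have hnupw : ¬ UpNoncrit K f (collOf K f w) w := fun h => no_both hK hf hCw hwCw h hdnw
  refine ⟨hdnw, hnupw, ?_⟩
  have := partner_down_spec hnupw hdnw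
  exact down_unique hf hCw hwCw ⟨this.1, this.2.1, this.2.2.1, this.2.2.2⟩
    ⟨hσ, hσCw, hfac, hfw⟩

lemma partner_down_inv {K : Finset (Finset ℕ)} {f : Finset ℕ → ℝ} {σ : Finset ℕ}
    (hK : IsComplex K) (hf : IsMorseBott K f) (hσ : σ ∈ K)
    (hnup : ¬ UpNoncrit K f (collOf K f σ) σ) (hdn : DownNoncrit K f (collOf K f σ) σ) :
    UpNoncrit K f (collOf K f (partner K f σ)) (partner K f σ) ∧
      partner K f (partner K f σ) = σ := by
  obtain ⟨hvK, hvC, hfac, hfv⟩ := partner_down_spec hnup hdn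
  set v := partner K f σ with hv
  have hCv := (collOf_spec (f := f) hvK).1
  have hvCv := (collOf_spec (f := f) hvK).2
  have hσCv : σ ∉ collOf K f v := not_mem_coll hCv hvCv (by linarith)
  have hupv : UpNoncrit K f (collOf K f v) v := ⟨σ, hσ, hσCv, hfac, hfv⟩
  refine ⟨hupv, ?_⟩
  have := partner_up_spec hupv
  exact up_unique hf hCv hvCv ⟨this.1, this.2.1, this.2.2.1, this.2.2.2⟩
    ⟨hσ, hσCv, hfac, hfv⟩

lemma symmDiff_pair_left {σ0 τ0 : Finset ℕ} : symmDiff (symmDiff σ0 τ0) σ0 = τ0 := by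
  rw [symmDiff_comm σ0 τ0, symmDiff_assoc, symmDiff_self, symmDiff_bot]

lemma symmDiff_pair_right {σ0 τ0 : Finset ℕ} : symmDiff (symmDiff σ0 τ0) τ0 = σ0 := by
  rw [symmDiff_assoc, symmDiff_self, symmDiff_bot]

lemma partner_pair {K : Finset (Finset ℕ)} {f : Finset ℕ → ℝ} {σ : Finset ℕ}
    (hσ : σ ∈ K)
    (hnup : ¬ UpNoncrit K f (collOf K f σ) σ) (hndn : ¬ DownNoncrit K f (collOf K f σ) σ)
    (hp : IsNoncritPair f (reducedOf K f (collOf K f σ))) :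
    partner K f σ ∈ reducedOf K f (collOf K f σ) ∧ partner K f σ ≠ σ ∧
      (Facet σ (partner K f σ) ∨ Facet (partner K f σ) σ) ∧
      partner K f (partner K f σ) = σ := by
  have hσC : σ ∈ collOf K f σ := (collOf_spec hσ).2
  have hσR : σ ∈ reducedOf K f (collOf K f σ) := mem_filter.mpr ⟨hσC, hnup, hndn⟩
  obtain ⟨hfac0, hfle0, hRe⟩ := hp.choose_spec.choose_spec
  set σ0 := hp.choose with hσ0
  set τ0 := hp.choose_spec.choose with hτ0
  rw [← hσ0] at hfac0 hfle0 hRe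
  have hne0 : σ0 ≠ τ0 := by
    intro h
    have h2 := hfac0.2
    rw [h] at h2; omega
  have hpσ : partner K f σ = symmDiff (symmDiff σ0 τ0) σ := by
    rw [partner, dif_neg hnup, dif_neg hndn, dif_pos hp]
  have hcases : σ = σ0 ∨ σ = τ0 := by
    have h := hσR
    rw [hRe, mem_insert, mem_singleton] at h
    exact h
  have hval : partner K f σ = (if σ = σ0 then τ0 else σ0) := by
    rcases hcases with h | h
    · rw [if_pos h, hpσ, h, symmDiff_pair_left]
    · have h' : σ ≠ σ0 := fun he => hne0 (he.symm.trans h)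
      rw [if_neg h', hpσ, h, symmDiff_pair_right]
  have hpR : partner K f σ ∈ reducedOf K f (collOf K f σ) := by
    rw [hval, hRe]
    by_cases h : σ = σ0 <;> simp [h]
  have hcollp : collOf K f (partner K f σ) = collOf K f σ :=
    collOf_eq (collOf_spec hσ).1 (mem_of_mem_filter _ hpR)
  have hpfilter := mem_filter.mp hpR
  refine ⟨hpR, ?_, ?_, ?_⟩
  · rw [hval]
    rcases hcases with h | h
    · rw [if_pos h]; intro he; exact hne0 (he.trans h).symm
    · by_cases h' : σ = σ0
      · exact absurd (h'.symm.trans h) hne0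
      · rw [if_neg h']; intro he; exact hne0 (he.trans h)
  · rcases hcases with h | h
    · left; rw [hval, if_pos h, h]; exact hfac0
    · right
      have h' : σ ≠ σ0 := fun he => hne0 (he.symm.trans h)
      rw [hval, if_neg h', h]; exact hfac0
  · have hRτ : reducedOf K f (collOf K f (partner K f σ)) =
        reducedOf K f (collOf K f σ) := by rw [hcollp]
    have hp' : IsNoncritPair f (reducedOf K f (collOf K f (partner K f σ))) := by
      rw [hRτ]; exact hp
    have key : ∀ (C1 C2 : Finset (Finset ℕ)) (h1 : IsNoncritPair f C1)
        (h2 : IsNoncritPair f C2), C1 = C2 →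
        h1.choose = h2.choose ∧ h1.choose_spec.choose = h2.choose_spec.choose := by
      rintro C1 C2 h1 h2 rfl; exact ⟨rfl, rfl⟩
    obtain ⟨ke1, ke2⟩ := key _ _ hp' hp hRτ
    have hnup' : ¬ UpNoncrit K f (collOf K f (partner K f σ)) (partner K f σ) := by
      rw [hcollp]; exact hpfilter.2.1
    have hndn' : ¬ DownNoncrit K f (collOf K f (partner K f σ)) (partner K f σ) := by
      rw [hcollp]; exact hpfilter.2.2
    rw [partner, dif_neg hnup', dif_neg hndn', dif_pos hp']
    rw [ke2, ke1]
    show symmDiff (symmDiff σ0 τ0) (partner K f σ) = σ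
    rw [hpσ, ← symmDiff_assoc, symmDiff_self, bot_symmDiff]

/-- the sum of the Euler characteristics of the nonempty reduced
collections that are not noncritical pairs equals the Euler characteristic of `K`. -/
theorem statement10 (K : Finset (Finset ℕ)) (hK : IsComplex K) (f : Finset ℕ → ℝ)
    (hf : IsMorseBott K f) (l : ℕ) (Cs : Fin l → Finset (Finset ℕ))
    (hcoll : ∀ i, IsCollection K f (Cs i))
    (hinj : Function.Injective Cs)
    (hgood : ∀ i, (reducedOf K f (Cs i)).Nonempty ∧
      ¬ IsNoncritPair f (reducedOf K f (Cs i)))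
    (hall : ∀ C, IsCollection K f C → (reducedOf K f C).Nonempty →
      ¬ IsNoncritPair f (reducedOf K f C) → ∃ i, Cs i = C) :
    ∑ i, ∑ σ ∈ reducedOf K f (Cs i), (-1 : ℤ) ^ (σ.card - 1) =
      ∑ σ ∈ K, (-1 : ℤ) ^ (σ.card - 1) := by
  classical
  set R : Fin l → Finset (Finset ℕ) := fun i => reducedOf K f (Cs i) with hR
  have hRsub : ∀ i, R i ⊆ Cs i := fun i => filter_subset _ _
  have hCsK : ∀ i, Cs i ⊆ K := fun i => (hcoll i).1.1
  have hdisj : (↑(univ : Finset (Fin l)) : Set (Fin l)).PairwiseDisjoint R := by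
    intro i _ j _ hij
    refine Finset.disjoint_left.mpr ?_
    intro σ hσi hσj
    exact hij (hinj (coll_unique (hcoll i) (hcoll j) (hRsub i hσi) (hRsub j hσj)))
  set G := (univ : Finset (Fin l)).biUnion R with hG
  have hGK : G ⊆ K := by
    intro σ hσ
    rw [hG, mem_biUnion] at hσ
    obtain ⟨i, _, h⟩ := hσ
    exact hCsK i (hRsub i h)
  have hsum1 : ∑ i, ∑ σ ∈ R i, (-1 : ℤ) ^ (σ.card - 1) =
      ∑ σ ∈ G, (-1 : ℤ) ^ (σ.card - 1) := (Finset.sum_biUnion hdisj).symm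
  have hsplit := Finset.sum_sdiff (f := fun σ : Finset ℕ => (-1 : ℤ) ^ (σ.card - 1)) hGK
  suffices hz : ∑ σ ∈ K \ G, (-1 : ℤ) ^ (σ.card - 1) = 0 by
    rw [hR] at hsum1
    rw [hsum1]
    rw [hz] at hsplit
    linarith [hsplit]
  have hnotG : ∀ a : Finset ℕ, a ∉ G → ∀ i, a ∉ R i := by
    intro a ha i hi
    exact ha (by rw [hG, mem_biUnion]; exact ⟨i, mem_univ i, hi⟩)
  have main : ∀ a ∈ K \ G, partner K f a ∈ K \ G ∧ partner K f (partner K f a) = a ∧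
      (Facet a (partner K f a) ∨ Facet (partner K f a) a) := by
    intro a ha
    rw [mem_sdiff] at ha
    obtain ⟨haK, haG⟩ := ha
    by_cases hup : UpNoncrit K f (collOf K f a) a
    · obtain ⟨hwK, hwC, hfac, hfw⟩ := partner_up_spec hup
      obtain ⟨hdnw, hnupw, hinv⟩ := partner_up_inv hK hf haK hup
      refine ⟨mem_sdiff.mpr ⟨hwK, ?_⟩, hinv, Or.inl hfac⟩
      intro hG'
      rw [hG, mem_biUnion] at hG'
      obtain ⟨i, _, hi⟩ := hG'
      have hceq : collOf K f (partner K f a) = Cs i := collOf_eq (hcoll i) (hRsub i hi)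
      have hfil := mem_filter.mp hi
      rw [hceq] at hdnw
      exact hfil.2.2 hdnw
    · by_cases hdn : DownNoncrit K f (collOf K f a) a
      · obtain ⟨hvK, hvC, hfac, hfv⟩ := partner_down_spec hup hdn
        obtain ⟨hupv, hinv⟩ := partner_down_inv hK hf haK hup hdn
        refine ⟨mem_sdiff.mpr ⟨hvK, ?_⟩, hinv, Or.inr hfac⟩
        intro hG'
        rw [hG, mem_biUnion] at hG'
        obtain ⟨i, _, hi⟩ := hG'
        have hceq : collOf K f (partner K f a) = Cs i := collOf_eq (hcoll i) (hRsub i hi)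
        have hfil := mem_filter.mp hi
        rw [hceq] at hupv
        exact hfil.2.1 hupv
      · have haC : a ∈ collOf K f a := (collOf_spec (f := f) haK).2
        have hCcoll : IsCollection K f (collOf K f a) := (collOf_spec (f := f) haK).1
        have haRed : a ∈ reducedOf K f (collOf K f a) := mem_filter.mpr ⟨haC, hup, hdn⟩
        have hpair : IsNoncritPair f (reducedOf K f (collOf K f a)) := by
          by_contra hnp
          obtain ⟨i, hi⟩ := hall (collOf K f a) hCcoll ⟨a, haRed⟩ hnp
          apply hnotG a haG i
          show a ∈ reducedOf K f (Cs i)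
          rw [hi]
          exact haRed
        obtain ⟨hpR, hpne, hpfac, hpinv⟩ := partner_pair haK hup hdn hpair
        have hpcoll : collOf K f (partner K f a) = collOf K f a :=
          collOf_eq hCcoll (mem_of_mem_filter _ hpR)
        refine ⟨mem_sdiff.mpr ⟨hCcoll.1.1 (mem_of_mem_filter _ hpR), ?_⟩, hpinv, hpfac⟩
        intro hG'
        rw [hG, mem_biUnion] at hG'
        obtain ⟨i, _, hi⟩ := hG'
        have hceq : collOf K f (partner K f a) = Cs i := collOf_eq (hcoll i) (hRsub i hi)
        apply (hgood i).2
        show IsNoncritPair f (reducedOf K f (Cs i))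
        rw [← hceq, hpcoll]
        exact hpair
  have neg : ∀ m n : ℕ, 1 ≤ m → 1 ≤ n → (m + 1 = n ∨ n + 1 = m) →
      (-1 : ℤ) ^ (m - 1) + (-1 : ℤ) ^ (n - 1) = 0 := by
    intro m n hm hn h
    rcases h with h | h
    · have he : n - 1 = (m - 1) + 1 := by omega
      rw [he, pow_succ]; ring
    · have he : m - 1 = (n - 1) + 1 := by omega
      rw [he, pow_succ]; ring
  refine Finset.sum_involution (fun a _ => partner K f a) ?_ ?_ ?_ ?_
  · intro a ha
    obtain ⟨hmem, _, hfac⟩ := main a ha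
    have h1 : 1 ≤ a.card := Finset.card_pos.mpr (hK.1 a (mem_sdiff.mp ha).1)
    have h2 : 1 ≤ (partner K f a).card :=
      Finset.card_pos.mpr (hK.1 _ (mem_sdiff.mp hmem).1)
    apply neg _ _ h1 h2
    rcases hfac with h | h
    · exact Or.inl h.2
    · exact Or.inr h.2
  · intro a ha _
    obtain ⟨_, _, hfac⟩ := main a ha
    intro he
    have he' : partner K f a = a := he
    rcases hfac with h | h <;> · rw [he'] at h; have := h.2; omega
  · intro a ha
    exact (main a ha).1
  · intro a ha
    exact (main a ha).2.1
end
end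

section
/- Let f be a discrete Morse-Bott function on a finite abstract simplicial complex K and for ε > 0 define f_ε(σ) = f(σ) − ε/(dim σ + 1). Then there exists ε₀ > 0 such that for all 0 < ε < ε₀, f_ε is a discrete Morse function on K in Forman's sense. -/
open Finset

noncomputable section
open scoped Classical

lemma exists_collection_aux (K : Finset (Finset ℕ)) (f : Finset ℕ → ℝ) {σ : Finset ℕ}
    (hσ : σ ∈ K) : ∃ C, IsCollection K f C ∧ σ ∈ C := by
  classical
  set S := K.powerset.filter (fun C => IsPreCollection K f C ∧ σ ∈ C) with hS
  have hsing : ({σ} : Finset (Finset ℕ)) ∈ S := by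
    simp only [hS, mem_filter, mem_powerset]
    refine ⟨by simpa using hσ,
      ⟨by simpa using hσ, ⟨σ, mem_singleton_self σ⟩, ?_, ?_⟩, mem_singleton_self σ⟩
    · intro a ha b hb; simp only [mem_singleton] at ha hb; subst ha; subst hb; rfl
    · intro a ha b hb; simp only [mem_singleton] at ha hb; subst ha; subst hb
      exact Relation.ReflTransGen.refl
  obtain ⟨C, hCS, hmax⟩ := S.exists_max_image Finset.card ⟨_, hsing⟩
  simp only [hS, mem_filter, mem_powerset] at hCS
  refine ⟨C, ⟨hCS.2.1, ?_⟩, hCS.2.2⟩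
  intro C' hC' hsub
  have hC'S : C' ∈ S := by
    simp only [hS, mem_filter, mem_powerset]
    exact ⟨hC'.1, hC', hsub hCS.2.2⟩
  exact (Finset.eq_of_subset_of_card_le hsub (hmax C' hC'S)).symm

/-- For a discrete Morse-Bott function `f` and
`f_ε(σ) = f(σ) − ε/(dim σ + 1)`, there is `ε₀ > 0` such that `f_ε` is a discrete Morse
function in Forman's sense for all `0 < ε < ε₀`. -/
theorem statement11 (K : Finset (Finset ℕ)) (hK : IsComplex K) (f : Finset ℕ → ℝ)
    (hf : IsMorseBott K f) :
    ∃ ε₀ > (0 : ℝ), ∀ ε : ℝ, 0 < ε → ε < ε₀ →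
      IsDiscreteMorse K (fun σ => f σ - ε / (((σ.card - 1) + 1 : ℕ) : ℝ)) := by
  classical
  set vals : Finset ℝ :=
    insert 1 (((K ×ˢ K).filter (fun p => Facet p.1 p.2 ∧ f p.2 < f p.1)).image
      (fun p => f p.1 - f p.2)) with hvals
  have hvne : vals.Nonempty := ⟨1, by simp [hvals]⟩
  refine ⟨vals.min' hvne, ?_, ?_⟩
  · rw [gt_iff_lt, Finset.lt_min'_iff]
    intro b hb
    simp only [hvals, mem_insert, mem_image, mem_filter, mem_product] at hb
    rcases hb with hb | ⟨p, ⟨_, _, hlt⟩, rfl⟩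
    · simp [hb]
    · linarith [hlt]
  intro ε hε hεε₀ σ hσ
  have hεlt : ∀ σ' ∈ K, ∀ τ' ∈ K, Facet σ' τ' → f τ' < f σ' → ε < f σ' - f τ' := by
    intro σ' hσ' τ' hτ' hfac hflt
    have hmem : f σ' - f τ' ∈ vals := by
      simp only [hvals, mem_insert, mem_image, mem_filter, mem_product]
      exact Or.inr ⟨(σ', τ'), ⟨⟨hσ', hτ'⟩, hfac, hflt⟩, rfl⟩
    exact lt_of_lt_of_le hεε₀ (vals.min'_le _ hmem)
  have hiff : ∀ σ' ∈ K, ∀ τ' ∈ K, Facet σ' τ' →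
      ((f τ' - ε / (((τ'.card - 1) + 1 : ℕ) : ℝ) ≤ f σ' - ε / (((σ'.card - 1) + 1 : ℕ) : ℝ))
        ↔ f τ' < f σ') := by
    intro σ' hσ' τ' hτ' hfac
    have hcσ : 1 ≤ σ'.card := Finset.card_pos.mpr (hK.1 σ' hσ')
    have hcτ : 1 ≤ τ'.card := Finset.card_pos.mpr (hK.1 τ' hτ')
    have e1 : ((σ'.card - 1) + 1 : ℕ) = σ'.card := Nat.succ_pred_eq_of_pos hcσ
    have e2 : ((τ'.card - 1) + 1 : ℕ) = τ'.card := Nat.succ_pred_eq_of_pos hcτ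
    rw [e1, e2]
    set a : ℝ := (σ'.card : ℝ) with ha
    set b : ℝ := (τ'.card : ℝ) with hb
    have ha1 : (1 : ℝ) ≤ a := by rw [ha]; exact_mod_cast hcσ
    have hab : b = a + 1 := by
      rw [ha, hb, ← hfac.2]; push_cast; ring
    have ha0 : (0 : ℝ) < a := by linarith
    have hb0 : (0 : ℝ) < b := by linarith
    have hdpos : 0 < ε / a - ε / b := by
      have : ε / b < ε / a := div_lt_div_of_pos_left hε ha0 (by linarith)
      linarith
    have hdle : ε / a - ε / b ≤ ε := by
      have h1 : ε / a ≤ ε := div_le_self hε.le ha1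
      have h2 : 0 < ε / b := div_pos hε hb0
      linarith
    constructor
    · intro h; linarith
    · intro h
      have := hεlt σ' hσ' τ' hτ' hfac h
      linarith
  obtain ⟨C, hC, hσC⟩ := exists_collection_aux K f hσ
  obtain ⟨hup, hdown⟩ := hf C hC σ hσC
  have hconst := hC.1.2.2.1
  constructor
  · refine le_trans (le_trans (Finset.card_le_card ?_) (le_refl _)) hup
    intro τ hτ
    simp only [mem_filter] at hτ ⊢
    obtain ⟨hτK, hfac, hle⟩ := hτ
    have hflt : f τ < f σ := (hiff σ hσ τ hτK hfac).mp hle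
    refine ⟨hτK, ?_, hfac, hflt⟩
    intro hτC
    exact absurd (hconst τ hτC σ hσC) (by linarith)
  · refine le_trans (Finset.card_le_card ?_) hdown
    intro ν hν
    simp only [mem_filter] at hν ⊢
    obtain ⟨hνK, hfac, hle⟩ := hν
    have hflt : f σ < f ν := (hiff ν hνK σ hσ hfac).mp hle
    refine ⟨hνK, ?_, hfac, hflt⟩
    intro hνC
    exact absurd (hconst ν hνC σ hσC) (by linarith)
end
end
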